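/- Let η, γ, ρ, ρ₁ > 0 and set a = 1 + ρ₁ + η. Let A be the real 2×2 matrix with rows (1 + ρ₁ + γρ, γ(a + γρ)) and (−ρ, −(γρ + η)). Then for every t ∈ ℝ, the matrix exponential satisfies exp(tA) = (ρ/a) · P · D(t) · Q, where P is the 2×2 matrix with rows (−γ, −(a+γρ)/ρ) and (1, 1), D(t) is the diagonal matrix diag(e^{−ηt}, e^{(1+ρ₁)t}), and Q is the 2×2 matrix with rows (1, (a+γρ)/ρ) and (−1, −γ). -/

import Mathlib

open Matrix Real

set_option maxHeartbeats 1000000 in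
/-- Explicit matrix-exponential formula (proof of Proposition 2): for the
matrix `A` governing the joint `(Γ*, m)` dynamics under performance-barrier
periodic event-triggered control, `exp(tA) = (ρ/a) P D(t) Q` by
diagonalization, where `a = 1 + ρ₁ + η`. -/
theorem matrix_exponential_formula
    (η γ ρ ρ₁ : ℝ) (hη : 0 < η) (hγ : 0 < γ) (hρ : 0 < ρ) (hρ₁ : 0 < ρ₁)
    (a : ℝ) (ha : a = 1 + ρ₁ + η)
    (A : Matrix (Fin 2) (Fin 2) ℝ)
    (hA : A = !![1 + ρ₁ + γ * ρ, γ * (a + γ * ρ); -ρ, -(γ * ρ + η)])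
    (P : Matrix (Fin 2) (Fin 2) ℝ)
    (hP : P = !![-γ, -((a + γ * ρ) / ρ); 1, 1])
    (Q : Matrix (Fin 2) (Fin 2) ℝ)
    (hQ : Q = !![1, (a + γ * ρ) / ρ; -1, -γ])
    (D : ℝ → Matrix (Fin 2) (Fin 2) ℝ)
    (hD : ∀ t : ℝ, D t = !![Real.exp (-η * t), 0; 0, Real.exp ((1 + ρ₁) * t)]) :
    ∀ t : ℝ, NormedSpace.exp (t • A) = (ρ / a) • (P * D t * Q) := by
  intro t
  have hρ0 : ρ ≠ 0 := ne_of_gt hρ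
  have ha0 : a ≠ 0 := by rw [ha]; positivity
  set S : Matrix (Fin 2) (Fin 2) ℝ := (ρ / a) • P with hS
  have hSQ : S * Q = 1 := by
    rw [hS, hP, hQ]
    ext i j
    fin_cases i <;> fin_cases j <;>
      simp [Matrix.mul_apply, Fin.sum_univ_two, Matrix.smul_apply,
        Matrix.one_apply] <;> field_simp <;> ring
  have hQS : Q * S = 1 := mul_eq_one_comm.mp hSQ
  set U : (Matrix (Fin 2) (Fin 2) ℝ)ˣ := ⟨S, Q, hSQ, hQS⟩ with hU
  have hd : Matrix.diagonal ![-η * t, (1 + ρ₁) * t]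
      = !![-η * t, 0; 0, (1 + ρ₁) * t] := by
    ext i j
    fin_cases i <;> fin_cases j <;> simp [Matrix.diagonal_apply]
  have hconj : t • A = (U : Matrix (Fin 2) (Fin 2) ℝ) *
      Matrix.diagonal ![-η * t, (1 + ρ₁) * t] *
      ((U⁻¹ : (Matrix (Fin 2) (Fin 2) ℝ)ˣ) : Matrix (Fin 2) (Fin 2) ℝ) := by
    show t • A = S * _ * Q
    rw [hd, hS, hA, hP, hQ, ha]
    ext i j
    fin_cases i <;> fin_cases j <;>
      simp [Matrix.mul_apply, Fin.sum_univ_two, Matrix.smul_apply] <;>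
      field_simp <;> ring
  rw [hconj, Matrix.exp_units_conj]
  show S * NormedSpace.exp (Matrix.diagonal ![-η * t, (1 + ρ₁) * t]) * Q = _
  rw [Matrix.exp_diagonal]
  have hdiag : Matrix.diagonal (NormedSpace.exp ![-η * t, (1 + ρ₁) * t]) = D t := by
    rw [hD t, Pi.exp_def]
    ext i j
    fin_cases i <;> fin_cases j <;>
      simp [Matrix.diagonal_apply, ← Real.exp_eq_exp_ℝ]
  rw [hdiag, hS, Matrix.smul_mul, Matrix.smul_mul]
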